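/- Let X be a proper CAT(0) geodesic metric space and let a group G act on X by isometries, properly discontinuously and cocompactly; fix p ∈ X and D > 0 such that every x ∈ X satisfies d(x, g·p) ≤ 2D for some g ∈ G. Let S = { g ∈ G : g·B(p,4D) ∩ B(p,4D) ≠ ∅ } (where B(p,4D) is the open ball), and let R be the set of all words over S of length at most 46 that represent the identity e. Then S is a finite symmetric generating set of G, R is finite with normal closure in F_S equal to the kernel of μ : F_S → G, and every word w = s₁⋯sₙ over S representing e satisfies Area_R(w) ≤ 24 · Σ_{i=1}^n (d_S(w̄(i), e) + 1). -/

import Mathlib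

open scoped Pointwise

/-- The product in `G` of a word over the subset `S ⊆ G`. -/
def wordProd {G : Type*} [Group G] (S : Set G) (w : List S) : G :=
  (w.map (fun s => (s : G))).prod

/-- The word metric `d_S(a,b)`: the least `n` such that `b⁻¹ * a` is a product of
`n` elements of `S`. -/
noncomputable def wordDist {G : Type*} [Group G] (S : Set G) (a b : G) : ℕ :=
  sInf {n | ∃ w : List S, w.length = n ∧ wordProd S w = b⁻¹ * a}

/-- The evaluation homomorphism `μ : F_S → G` from the free group on `S`. -/
noncomputable def muEval {G : Type*} [Group G] (S : Set G) : FreeGroup S →* G :=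
  FreeGroup.lift (fun s => (s : G))

/-- A word over `S`, regarded as an element of the free group `F_S`. -/
def wordToFree {G : Type*} [Group G] (S : Set G) (w : List S) : FreeGroup S :=
  (w.map FreeGroup.of).prod

/-- The combinatorial area of a word `w` over `S` with respect to the relator set
`R ⊆ F_S`: the least `k` such that `w = ∏_{i=1}^k vᵢ rᵢ vᵢ⁻¹` in `F_S` with each
`rᵢ ∈ R` or `rᵢ⁻¹ ∈ R`. -/
noncomputable def area {G : Type*} [Group G] (S : Set G) (R : Set (FreeGroup S))
    (w : List S) : ℕ :=
  sInf {k | ∃ v r : Fin k → FreeGroup S,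
    (∀ i, r i ∈ R ∨ (r i)⁻¹ ∈ R) ∧
    wordToFree S w = (List.ofFn (fun i => v i * r i * (v i)⁻¹)).prod}

/-- `γ : ℝ → X` is a geodesic from `x` to `y`: it is defined (relevantly) on
`[0, d(x,y)]`, starts at `x`, ends at `y`, and is an isometric embedding there. -/
def IsGeodesic {X : Type*} [MetricSpace X] (γ : ℝ → X) (x y : X) : Prop :=
  γ 0 = x ∧ γ (dist x y) = y ∧
    ∀ s ∈ Set.Icc (0 : ℝ) (dist x y), ∀ t ∈ Set.Icc (0 : ℝ) (dist x y),
      dist (γ s) (γ t) = |s - t|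

/-- `X` is a geodesic metric space: every pair of points is joined by a geodesic. -/
def IsGeodesicSpace (X : Type*) [MetricSpace X] : Prop :=
  ∀ x y : X, ∃ γ : ℝ → X, IsGeodesic γ x y

/-- `X` is a CAT(0) space: the comparison inequality holds along every geodesic. -/
def IsCAT0 (X : Type*) [MetricSpace X] : Prop :=
  ∀ x y z : X, ∀ γ : ℝ → X, IsGeodesic γ y z → ∀ t ∈ Set.Icc (0 : ℝ) 1,
    dist x (γ (t * dist y z)) ^ 2 ≤
      (1 - t) * dist x y ^ 2 + t * dist x z ^ 2 - t * (1 - t) * dist y z ^ 2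

section Basic
variable {G : Type*} [Group G] {S : Set G}

@[simp] lemma wordProd_nil : wordProd S [] = 1 := rfl
@[simp] lemma wordProd_cons (a : S) (w : List S) :
    wordProd S (a :: w) = (a : G) * wordProd S w := by simp [wordProd]
lemma wordProd_append (u v : List S) :
    wordProd S (u ++ v) = wordProd S u * wordProd S v := by simp [wordProd]
@[simp] lemma wordToFree_nil : wordToFree S ([] : List S) = 1 := rfl
@[simp] lemma wordToFree_cons (a : S) (w : List S) :
    wordToFree S (a :: w) = FreeGroup.of a * wordToFree S w := by simp [wordToFree]
lemma wordToFree_append (u v : List S) :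
    wordToFree S (u ++ v) = wordToFree S u * wordToFree S v := by simp [wordToFree]
@[simp] lemma wordToFree_singleton (a : S) : wordToFree S [a] = FreeGroup.of a := by
  simp [wordToFree]

@[simp] lemma muEval_wordToFree (w : List S) :
    muEval S (wordToFree S w) = wordProd S w := by
  induction w with
  | nil => simp
  | cons a t ih =>
    rw [wordToFree_cons, map_mul, ih]
    rw [wordProd_cons]
    congr 1
    simp [muEval]

lemma wordProd_telescope (k : ℕ) (q : ℕ → G) (hmem : ∀ j, j < k → (q j)⁻¹ * q (j+1) ∈ S) :
    wordProd S (List.ofFn (fun j : Fin k => (⟨(q j)⁻¹ * q (j+1), hmem j j.2⟩ : S)))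
      = (q 0)⁻¹ * q k := by
  induction k generalizing q with
  | zero => simp
  | succ k ih =>
    rw [List.ofFn_succ]
    have := ih (fun j => q (j+1)) (fun j hj => hmem (j+1) (by omega))
    simp only [wordProd_cons, Fin.val_succ]
    rw [this]
    simp only [Fin.val_zero]
    group

lemma wordProd_mem_closure (w : List S) : wordProd S w ∈ Subgroup.closure S := by
  induction w with
  | nil => exact one_mem _
  | cons a t ih =>
    rw [wordProd_cons]
    exact mul_mem (Subgroup.subset_closure a.2) ih

end Basic

section NrelTest
variable {G : Type*} [Group G] {S : Set G}

def Nrel (R : Set (FreeGroup S)) (x : FreeGroup S) (k : ℕ) : Prop :=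
  ∃ l : List (FreeGroup S × FreeGroup S), l.length ≤ k ∧
    (∀ pr ∈ l, pr.2 ∈ R ∨ pr.2⁻¹ ∈ R) ∧
    x = (l.map fun pr => pr.1 * pr.2 * pr.1⁻¹).prod

variable {R : Set (FreeGroup S)}

set_option linter.unusedSectionVars false

private lemma conj_prod_map (c : FreeGroup S) (l : List (FreeGroup S × FreeGroup S)) :
    (List.map (fun pr => pr.1 * pr.2 * pr.1⁻¹) (l.map fun pr => (c * pr.1, pr.2))).prod
      = c * (l.map fun pr => pr.1 * pr.2 * pr.1⁻¹).prod * c⁻¹ := by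
  induction l with
  | nil => simp
  | cons a t ih =>
    simp only [List.map_cons, List.prod_cons, ih]
    group

private lemma inv_prod_map (l : List (FreeGroup S × FreeGroup S)) :
    (l.map fun pr => pr.1 * pr.2 * pr.1⁻¹).prod⁻¹
      = (List.map (fun pr => pr.1 * pr.2 * pr.1⁻¹) ((l.map fun pr => (pr.1, pr.2⁻¹)).reverse)).prod := by
  induction l with
  | nil => simp
  | cons a t ih =>
    simp only [List.map_cons, List.prod_cons, mul_inv_rev, List.reverse_cons, List.map_append,
      List.prod_append, ih]
    simp
    group

lemma Nrel.mono {x k k'} (h : Nrel R x k) (hk : k ≤ k') : Nrel R x k' := by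
  obtain ⟨l, h1, h2, h3⟩ := h; exact ⟨l, h1.trans hk, h2, h3⟩

lemma Nrel_one : Nrel R (1 : FreeGroup S) 0 := ⟨[], by simp, by simp, by simp⟩

lemma Nrel.mul {x y a b} (hx : Nrel R x a) (hy : Nrel R y b) : Nrel R (x * y) (a + b) := by
  obtain ⟨l1, h1, h2, h3⟩ := hx
  obtain ⟨l2, g1, g2, g3⟩ := hy
  refine ⟨l1 ++ l2, by simp; omega, ?_, by simp [h3, g3]⟩
  intro pr hpr
  rcases List.mem_append.1 hpr with h | h
  · exact h2 pr h
  · exact g2 pr h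

lemma Nrel.conj {x k} (c : FreeGroup S) (hx : Nrel R x k) : Nrel R (c * x * c⁻¹) k := by
  obtain ⟨l, h1, h2, h3⟩ := hx
  refine ⟨l.map fun pr => (c * pr.1, pr.2), by simp [h1], ?_, ?_⟩
  · intro pr hpr
    obtain ⟨pr', hpr', rfl⟩ := List.mem_map.1 hpr
    exact h2 pr' hpr'
  · subst h3
    rw [conj_prod_map]

lemma Nrel_of_mem {x} (hx : x ∈ R) : Nrel R x 1 :=
  ⟨[(1, x)], by simp, by simp [hx], by simp⟩

lemma Nrel_of_inv_mem {x} (hx : x⁻¹ ∈ R) : Nrel R x 1 :=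
  ⟨[(1, x)], by simp, by simp [hx], by simp⟩

lemma Nrel.inv {x k} (hx : Nrel R x k) : Nrel R x⁻¹ k := by
  obtain ⟨l, h1, h2, h3⟩ := hx
  refine ⟨(l.map fun pr => (pr.1, pr.2⁻¹)).reverse, by simp [h1], ?_, ?_⟩
  · intro pr hpr
    simp only [List.mem_reverse, List.mem_map] at hpr
    obtain ⟨pr', hpr', rfl⟩ := hpr
    rcases h2 pr' hpr' with h | h
    · exact Or.inr (by simpa using h)
    · exact Or.inl h
  · subst h3
    rw [inv_prod_map]

lemma Nrel.mem_normalClosure {x k} (hx : Nrel R x k) :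
    x ∈ Subgroup.normalClosure R := by
  obtain ⟨l, h1, h2, h3⟩ := hx
  subst h3
  induction l with
  | nil => simp
  | cons a t ih =>
    simp only [List.map_cons, List.prod_cons]
    refine mul_mem ?_ (ih (by simpa using h1.trans (Nat.le_succ _) ) ?_)
    · have : a.2 ∈ Subgroup.normalClosure R := by
        rcases h2 a (by simp) with h | h
        · exact Subgroup.subset_normalClosure h
        · exact (Subgroup.normalClosure R).inv_mem_iff.1 (Subgroup.subset_normalClosure h)
      exact Subgroup.normalClosure_normal.conj_mem _ this _
    · intro pr hpr; exact h2 pr (by simp [hpr])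

end NrelTest

section Star
variable {G : Type*} [Group G] {S : Set G} {R : Set (FreeGroup S)}
set_option linter.unusedSectionVars false

def invLetter (hsymm : ∀ s : S, ((s : G))⁻¹ ∈ S) (s : S) : S := ⟨(s : G)⁻¹, hsymm s⟩

@[simp] lemma coe_invLetter (hsymm : ∀ s : S, ((s : G))⁻¹ ∈ S) (s : S) :
    (invLetter hsymm s : G) = (s : G)⁻¹ := rfl

def starWord (hsymm : ∀ s : S, ((s : G))⁻¹ ∈ S) (u : List S) : List S :=
  (u.map (invLetter hsymm)).reverse

variable (hsymm : ∀ s : S, ((s : G))⁻¹ ∈ S)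

@[simp] lemma starWord_length (u : List S) : (starWord hsymm u).length = u.length := by
  simp [starWord]

lemma starWord_cons (a : S) (u : List S) :
    starWord hsymm (a :: u) = starWord hsymm u ++ [invLetter hsymm a] := by
  simp [starWord]

lemma wordProd_starWord (u : List S) :
    wordProd S (starWord hsymm u) = (wordProd S u)⁻¹ := by
  induction u with
  | nil => simp [starWord]
  | cons a t ih => rw [starWord_cons, wordProd_append, ih]; simp

lemma Nrel_word_star
    (hRc : ∀ w : List S, w.length ≤ 46 → wordProd S w = 1 → wordToFree S w ∈ R)
    (u : List S) :
    Nrel R (wordToFree S u * wordToFree S (starWord hsymm u)) u.length := by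
  induction u with
  | nil => simpa [starWord] using (Nrel_one : Nrel R _ 0)
  | cons a t ih =>
    rw [starWord_cons, wordToFree_append, wordToFree_cons]
    have h2 : Nrel R (FreeGroup.of a * wordToFree S [invLetter hsymm a]) 1 := by
      have : wordToFree S [a, invLetter hsymm a] ∈ R :=
        hRc _ (by simp) (by simp)
      simpa [wordToFree] using Nrel_of_mem this
    have key : FreeGroup.of a * wordToFree S t * (wordToFree S (starWord hsymm t) *
        wordToFree S [invLetter hsymm a]) =
        (FreeGroup.of a * (wordToFree S t * wordToFree S (starWord hsymm t)) *
          (FreeGroup.of a)⁻¹) * (FreeGroup.of a * wordToFree S [invLetter hsymm a]) := by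
      group
    rw [key]
    simpa [add_comm] using (ih.conj (FreeGroup.of a)).mul h2

/-- From `Nrel` to a bound on `area`. -/
lemma area_le_of_Nrel {w : List S} {k : ℕ} (h : Nrel R (wordToFree S w) k) :
    area S R w ≤ k := by
  obtain ⟨l, h1, h2, h3⟩ := h
  have : l.length ∈ {k | ∃ v r : Fin k → FreeGroup S,
      (∀ i, r i ∈ R ∨ (r i)⁻¹ ∈ R) ∧
      wordToFree S w = (List.ofFn (fun i => v i * r i * (v i)⁻¹)).prod} := by
    refine ⟨fun i => (l.get i).1, fun i => (l.get i).2, fun i => h2 _ (by simpa using List.get_mem l i.1 i.2), ?_⟩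
    rw [h3]
    congr 1
    conv_lhs => rw [← List.ofFn_get l]
    rw [List.map_ofFn]
    rfl
  exact le_trans (Nat.sInf_le this) h1

end Star

section Geo
variable {X : Type*} [MetricSpace X]

/-- Convexity: geodesics from a common point diverge at most linearly. -/
lemma cat0_convex (hcat : IsCAT0 X) {o a b : X} {α β : ℝ → X}
    (hα : IsGeodesic α o a) (hβ : IsGeodesic β o b) {t : ℝ} (ht : t ∈ Set.Icc (0:ℝ) 1) :
    dist (α (t * dist o a)) (β (t * dist o b)) ≤ t * dist a b := by
  obtain ⟨ht0, ht1⟩ := ht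
  obtain ⟨hα0, hαe, hαi⟩ := hα
  have hA : (0:ℝ) ≤ dist o a := dist_nonneg
  have hB : (0:ℝ) ≤ dist o b := dist_nonneg
  have h1 := hcat (α (t * dist o a)) o b β hβ t ⟨ht0, ht1⟩
  have h2 := hcat b o a α ⟨hα0, hαe, hαi⟩ t ⟨ht0, ht1⟩
  have hd : dist (α (t * dist o a)) o = t * dist o a := by
    have := hαi (t * dist o a) ⟨by positivity, by nlinarith⟩ 0 ⟨le_refl _, hA⟩
    rw [hα0] at this
    rw [this, sub_zero, abs_of_nonneg (by positivity)]
  have hsq : dist (α (t * dist o a)) (β (t * dist o b)) ^ 2 ≤ (t * dist a b) ^ 2 := by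
    have e1 : dist (α (t * dist o a)) b = dist b (α (t * dist o a)) := dist_comm _ _
    have e2 : dist b o = dist o b := dist_comm _ _
    have e3 : dist b a = dist a b := dist_comm _ _
    rw [e2, e3] at h2
    rw [hd, e1] at h1
    nlinarith [mul_le_mul_of_nonneg_left h2 ht0]
  have := (pow_le_pow_iff_left₀ dist_nonneg (by positivity) two_ne_zero).1 hsq
  exact this

end Geo

section Main
variable {G X : Type*} [Group G] [MetricSpace X] [MulAction G X]
variable {p : X} {D : ℝ} {S : Set G}

set_option linter.unusedSectionVars false
set_option maxHeartbeats 1000000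

lemma mem_S_iff (hgeo : IsGeodesicSpace X)
    (hiso : ∀ (g : G) (x y : X), dist (g • x) (g • y) = dist x y)
    (hD : 0 < D)
    (hS : S = {g : G | ((g • ·) '' Metric.ball p (4 * D) ∩ Metric.ball p (4 * D)).Nonempty})
    (g : G) : g ∈ S ↔ dist (g • p) p < 8 * D := by
  subst hS
  constructor
  · rintro ⟨x, ⟨y, hy, rfl⟩, hx⟩
    simp only [Metric.mem_ball] at hy hx
    calc dist (g • p) p ≤ dist (g • p) (g • y) + dist (g • y) p := dist_triangle _ _ _
      _ = dist p y + dist (g • y) p := by rw [hiso]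
      _ = dist y p + dist (g • y) p := by rw [dist_comm]
      _ < 4 * D + 4 * D := add_lt_add hy hx
      _ = 8 * D := by ring
  · intro hlt
    obtain ⟨γ, hγ0, hγe, hγi⟩ := hgeo p (g • p)
    set L := dist p (g • p) with hL
    have hL0 : 0 ≤ L := dist_nonneg
    have hmem : L / 2 ∈ Set.Icc (0:ℝ) L := ⟨by linarith, by linarith⟩
    have h1 : dist (γ (L/2)) p = L / 2 := by
      have := hγi (L/2) hmem 0 ⟨le_refl _, hL0⟩
      rw [hγ0] at this
      rw [this, sub_zero, abs_of_nonneg (by linarith)]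
    have h2 : dist (γ (L/2)) (g • p) = L / 2 := by
      have := hγi (L/2) hmem L ⟨hL0, le_refl _⟩
      rw [hγe] at this
      rw [this, abs_of_nonpos (by linarith)]
      ring
    have hd : dist (g • p) p = L := by rw [hL, dist_comm]
    rw [hd] at hlt
    refine ⟨γ (L/2), ⟨g⁻¹ • γ (L/2), ?_, ?_⟩, ?_⟩
    · simp only [Metric.mem_ball]
      have : dist (g⁻¹ • γ (L/2)) p = dist (γ (L/2)) (g • p) := by
        rw [← hiso g (g⁻¹ • γ (L/2)) p, smul_inv_smul]
      rw [this, h2]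
      linarith
    · simp [smul_inv_smul]
    · simp only [Metric.mem_ball]
      rw [h1]
      linarith

lemma one_mem_S (hSd : ∀ g : G, g ∈ S ↔ dist (g • p) p < 8 * D) (hD : 0 < D) : (1:G) ∈ S := by
  rw [hSd, one_smul, dist_self]; linarith

lemma inv_mem_S (hiso : ∀ (g : G) (x y : X), dist (g • x) (g • y) = dist x y)
    (hSd : ∀ g : G, g ∈ S ↔ dist (g • p) p < 8 * D) {g : G} (hg : g ∈ S) : g⁻¹ ∈ S := by
  rw [hSd] at hg ⊢
  have : dist (g⁻¹ • p) p = dist p (g • p) := by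
    rw [← hiso g (g⁻¹ • p) p, smul_inv_smul]
  rw [this, dist_comm]
  exact hg

/-- Lemma A: a group element moving `p` less than `4Dk` is a product of at most `k`
elements of `S`. -/
lemma exists_word_of_dist (hgeo : IsGeodesicSpace X)
    (hiso : ∀ (g : G) (x y : X), dist (g • x) (g • y) = dist x y)
    (hD : 0 < D) (hcocpt : ∀ x : X, ∃ g : G, dist x (g • p) ≤ 2 * D)
    (hSd : ∀ g : G, g ∈ S ↔ dist (g • p) p < 8 * D)
    (k : ℕ) (g : G) (hk : dist p (g • p) < 4 * D * k) :
    ∃ w : List S, w.length ≤ k ∧ wordProd S w = g := by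
  have hk0 : k ≠ 0 := by
    rintro rfl
    norm_num at hk
    nlinarith [dist_nonneg (x := p) (y := g • p)]
  obtain ⟨γ, hγ0, hγe, hγi⟩ := hgeo p (g • p)
  set L := dist p (g • p) with hL
  have hL0 : 0 ≤ L := dist_nonneg
  have hkpos : (0:ℝ) < (k:ℝ) := by exact_mod_cast Nat.pos_of_ne_zero hk0
  set u := L / k with hu
  have hu0 : 0 ≤ u := div_nonneg hL0 hkpos.le
  have hku : (k:ℝ) * u = L := by rw [hu, mul_div_assoc']; exact mul_div_cancel_left₀ L hkpos.ne'
  have hu4 : u < 4 * D := by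
    rw [hu, div_lt_iff₀ hkpos]
    calc L < 4 * D * k := hk
      _ = 4 * D * (k:ℝ) := by ring
  set q : ℕ → G := fun j =>
    if j = 0 then 1 else if k ≤ j then g else Classical.choose (hcocpt (γ (j * u))) with hqdef
  have hq0 : q 0 = 1 := by simp [hqdef]
  have hqk : q k = g := by simp [hqdef, hk0]
  have harg : ∀ j, j ≤ k → (j:ℝ) * u ∈ Set.Icc (0:ℝ) L := by
    intro j hj
    constructor
    · positivity
    · calc (j:ℝ) * u ≤ (k:ℝ) * u := by
            have : (j:ℝ) ≤ (k:ℝ) := by exact_mod_cast hj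
            nlinarith
        _ = L := hku
  have hq : ∀ j, j ≤ k → dist (γ ((j:ℝ) * u)) (q j • p) ≤ 2 * D := by
    intro j hj
    by_cases h0 : j = 0
    · subst h0
      simp only [hqdef, if_pos rfl, Nat.cast_zero, zero_mul, one_smul, hγ0, dist_self]
      linarith
    by_cases hkj : k ≤ j
    · have hjk : j = k := le_antisymm hj hkj
      subst hjk
      simp only [hqdef, if_neg h0, if_pos hkj, hku, hγe, dist_self]
      linarith
    · have : q j = Classical.choose (hcocpt (γ (j * u))) := by
        simp [hqdef, h0, hkj]
      rw [this]
      exact Classical.choose_spec (hcocpt (γ (j * u)))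
  have hmem : ∀ j, j < k → (q j)⁻¹ * q (j+1) ∈ S := by
    intro j hj
    rw [hSd]
    have e : dist (((q j)⁻¹ * q (j+1)) • p) p = dist (q (j+1) • p) (q j • p) := by
      calc dist (((q j)⁻¹ * q (j+1)) • p) p
          = dist (q j • (((q j)⁻¹ * q (j+1)) • p)) (q j • p) := (hiso _ _ _).symm
        _ = dist (q (j+1) • p) (q j • p) := by rw [smul_smul, mul_inv_cancel_left]
    rw [e]
    have hmid : dist (γ (((j:ℝ)+1) * u)) (γ ((j:ℝ) * u)) = u := by
      have h1 := harg (j+1) hj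
      push_cast at h1
      have := hγi (((j:ℝ)+1) * u) h1 ((j:ℝ) * u) (harg j hj.le)
      rw [this]
      rw [show ((j:ℝ)+1) * u - (j:ℝ) * u = u by ring, abs_of_nonneg hu0]
    have t1 : dist (q (j+1) • p) (γ (((j:ℝ)+1) * u)) ≤ 2 * D := by
      rw [dist_comm]
      have := hq (j+1) hj
      push_cast at this
      exact this
    have t3 : dist (γ ((j:ℝ) * u)) (q j • p) ≤ 2 * D := hq j hj.le
    calc dist (q (j+1) • p) (q j • p)
        ≤ dist (q (j+1) • p) (γ (((j:ℝ)+1) * u)) + dist (γ (((j:ℝ)+1) * u)) (γ ((j:ℝ) * u))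
            + dist (γ ((j:ℝ) * u)) (q j • p) := dist_triangle4 _ _ _ _
      _ ≤ 2 * D + u + 2 * D := by linarith [hmid.le, t1, t3, hmid.ge]
      _ < 8 * D := by linarith
  refine ⟨List.ofFn (fun j : Fin k => (⟨(q j)⁻¹ * q (j+1), hmem j j.2⟩ : S)), by simp, ?_⟩
  rw [wordProd_telescope k q hmem, hq0, hqk, inv_one, one_mul]

lemma dist_wordProd_le (hiso : ∀ (g : G) (x y : X), dist (g • x) (g • y) = dist x y)
    (hSd : ∀ g : G, g ∈ S ↔ dist (g • p) p < 8 * D)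
    (w : List S) : dist p ((wordProd S w) • p) ≤ 8 * D * w.length := by
  induction w with
  | nil => simp
  | cons a t ih =>
    rw [wordProd_cons]
    calc dist p ((↑a * wordProd S t) • p)
        ≤ dist p ((a:G) • p) + dist ((a:G) • p) ((↑a * wordProd S t) • p) := dist_triangle _ _ _
      _ = dist p ((a:G) • p) + dist p ((wordProd S t) • p) := by
          rw [mul_smul, hiso]
      _ ≤ 8 * D + 8 * D * t.length := by
          have := (hSd a).1 a.2
          rw [dist_comm] at this
          linarith
      _ = 8 * D * (t.length + 1 : ℕ) := by push_cast; ring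
      _ = 8 * D * (a :: t).length := by simp

end Main

section Main2
variable {G X : Type*} [Group G] [MetricSpace X] [MulAction G X]
variable {p : X} {D : ℝ} {S : Set G}

set_option linter.unusedSectionVars false
set_option maxHeartbeats 1000000

lemma exists_min_word (hgeo : IsGeodesicSpace X)
    (hiso : ∀ (g : G) (x y : X), dist (g • x) (g • y) = dist x y)
    (hD : 0 < D) (hcocpt : ∀ x : X, ∃ g : G, dist x (g • p) ≤ 2 * D)
    (hSd : ∀ g : G, g ∈ S ↔ dist (g • p) p < 8 * D) (g : G) :
    ∃ w : List S, w.length = wordDist S g 1 ∧ wordProd S w = g := by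
  have hne : {n | ∃ w : List S, w.length = n ∧ wordProd S w = (1:G)⁻¹ * g}.Nonempty := by
    obtain ⟨k, hk⟩ := exists_nat_gt (dist p (g • p) / (4 * D))
    have h4 : (0:ℝ) < 4 * D := by linarith
    obtain ⟨w, _, hw⟩ := exists_word_of_dist hgeo hiso hD hcocpt hSd k g
      (by rw [div_lt_iff₀ h4] at hk; calc dist p (g • p) < k * (4*D) := hk
            _ = 4 * D * k := by ring)
    exact ⟨w.length, w, rfl, by rw [hw, inv_one, one_mul]⟩
  obtain ⟨w, hlen, hprod⟩ := Nat.sInf_mem hne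
  exact ⟨w, hlen, by rwa [inv_one, one_mul] at hprod⟩

lemma wordDist_le_length (g : G) (w : List S) (h : wordProd S w = g) :
    wordDist S g 1 ≤ w.length :=
  Nat.sInf_le ⟨w, rfl, by rw [inv_one, one_mul, h]⟩

lemma wordDist_one_one : wordDist S (1:G) 1 = 0 :=
  Nat.le_zero.1 (wordDist_le_length (1:G) [] (by simp))

lemma eq_one_of_wordDist_zero (hgeo : IsGeodesicSpace X)
    (hiso : ∀ (g : G) (x y : X), dist (g • x) (g • y) = dist x y)
    (hD : 0 < D) (hcocpt : ∀ x : X, ∃ g : G, dist x (g • p) ≤ 2 * D)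
    (hSd : ∀ g : G, g ∈ S ↔ dist (g • p) p < 8 * D) {g : G}
    (h : wordDist S g 1 = 0) : g = 1 := by
  obtain ⟨w, hlen, hprod⟩ := exists_min_word hgeo hiso hD hcocpt hSd g
  rw [h, List.length_eq_zero_iff] at hlen
  subst hlen
  simpa using hprod.symm

lemma dist_le_wordDist (hgeo : IsGeodesicSpace X)
    (hiso : ∀ (g : G) (x y : X), dist (g • x) (g • y) = dist x y)
    (hD : 0 < D) (hcocpt : ∀ x : X, ∃ g : G, dist x (g • p) ≤ 2 * D)
    (hSd : ∀ g : G, g ∈ S ↔ dist (g • p) p < 8 * D) (g : G) :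
    dist p (g • p) ≤ 8 * D * (wordDist S g 1) := by
  obtain ⟨w, hlen, hprod⟩ := exists_min_word hgeo hiso hD hcocpt hSd g
  have := dist_wordProd_le hiso hSd w
  rwa [hprod, hlen] at this

lemma wordDist_mul_le (g : G) (s : S) (hgeo : IsGeodesicSpace X)
    (hiso : ∀ (g : G) (x y : X), dist (g • x) (g • y) = dist x y)
    (hD : 0 < D) (hcocpt : ∀ x : X, ∃ g : G, dist x (g • p) ≤ 2 * D)
    (hSd : ∀ g : G, g ∈ S ↔ dist (g • p) p < 8 * D) :
    wordDist S (g * s) 1 ≤ wordDist S g 1 + 1 := by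
  obtain ⟨w, hlen, hprod⟩ := exists_min_word hgeo hiso hD hcocpt hSd g
  have : wordProd S (w ++ [s]) = g * s := by rw [wordProd_append, hprod]; simp [wordProd]
  have := wordDist_le_length (g * s) _ this
  simpa [hlen] using this

lemma wordDist_le_mul (g : G) (s : S) (hgeo : IsGeodesicSpace X)
    (hiso : ∀ (g : G) (x y : X), dist (g • x) (g • y) = dist x y)
    (hD : 0 < D) (hcocpt : ∀ x : X, ∃ g : G, dist x (g • p) ≤ 2 * D)
    (hSd : ∀ g : G, g ∈ S ↔ dist (g • p) p < 8 * D) :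
    wordDist S g 1 ≤ wordDist S (g * s) 1 + 1 := by
  obtain ⟨w, hlen, hprod⟩ := exists_min_word hgeo hiso hD hcocpt hSd (g * s)
  have hs' : ((s:G))⁻¹ ∈ S := inv_mem_S hiso hSd s.2
  have : wordProd S (w ++ [⟨(s:G)⁻¹, hs'⟩]) = g := by
    rw [wordProd_append, hprod]; simp [wordProd]
  have := wordDist_le_length g _ this
  simpa [hlen] using this

/-- The key geometric estimate for rungs of the ladder. -/
lemma rung_geo (hcat : IsCAT0 X) {a b : X} {γ γ' : ℝ → X}
    (hγ : IsGeodesic γ p a) (hγ' : IsGeodesic γ' p b)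
    {m m' j : ℕ} (hD : 0 < D)
    (hm : 1 ≤ m) (hm' : 1 ≤ m')
    (hL : dist p a ≤ 8 * D * m) (hL' : dist p b ≤ 8 * D * m')
    (hab : dist a b ≤ 8 * D)
    (hmm' : m' ≤ m + 1) (hm'm : m ≤ m' + 1)
    (hjm : j ≤ m) (hjm' : j ≤ m') :
    dist (γ ((j:ℝ) * (dist p a / m))) (γ' ((j:ℝ) * (dist p b / m'))) ≤ 24 * D := by
  set L := dist p a with hLdef
  set L' := dist p b with hL'def
  have hL0 : 0 ≤ L := dist_nonneg
  have hL0' : 0 ≤ L' := dist_nonneg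
  set M := max m m' with hM
  have hmM : m ≤ M := le_max_left _ _
  have hm'M : m' ≤ M := le_max_right _ _
  have hM1 : 1 ≤ M := le_trans hm hmM
  have hMm1 : M ≤ m + 1 := max_le (by omega) hmm'
  have hMm1' : M ≤ m' + 1 := max_le hm'm (by omega)
  have hMpos : (0:ℝ) < M := by exact_mod_cast hM1
  have hmpos : (0:ℝ) < m := by exact_mod_cast hm
  have hm'pos : (0:ℝ) < m' := by exact_mod_cast hm'
  set t := (j:ℝ) / M with ht
  have ht0 : 0 ≤ t := by positivity
  have hjM : (j:ℝ) ≤ M := by exact_mod_cast le_trans hjm hmM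
  have ht1 : t ≤ 1 := by rw [ht, div_le_one hMpos]; exact hjM
  -- generic reparametrization estimate
  have repar : ∀ (δ : ℝ → X) (c : X), IsGeodesic δ p c → ∀ (mm : ℕ), 1 ≤ mm → mm ≤ M →
      M ≤ mm + 1 → j ≤ mm → dist p c ≤ 8 * D * mm →
      dist (δ ((j:ℝ) * (dist p c / mm))) (δ (t * dist p c)) ≤ 8 * D := by
    intro δ c hδ mm hmm1 hmmM hMmm hjmm hLc
    obtain ⟨hδ0, hδe, hδi⟩ := hδ
    have hmmpos : (0:ℝ) < mm := by exact_mod_cast hmm1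
    have hC0 : (0:ℝ) ≤ dist p c := dist_nonneg
    have harg1 : (j:ℝ) * (dist p c / mm) ∈ Set.Icc (0:ℝ) (dist p c) := by
      constructor
      · positivity
      · rw [mul_div_assoc'] at *
        rw [div_le_iff₀ hmmpos]
        have : (j:ℝ) ≤ mm := by exact_mod_cast hjmm
        nlinarith
    have harg2 : t * dist p c ∈ Set.Icc (0:ℝ) (dist p c) := by
      constructor
      · positivity
      · nlinarith
    rw [hδi _ harg1 _ harg2]
    have hmmM' : (mm:ℝ) ≤ M := by exact_mod_cast hmmM
    have hMmm' : (M:ℝ) ≤ mm + 1 := by exact_mod_cast hMmm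
    have key : (j:ℝ) * (dist p c / mm) - t * dist p c =
        (j:ℝ) * dist p c * (M - mm) / (mm * M) := by
      rw [ht]; field_simp
    rw [key]
    rw [abs_of_nonneg (by
      apply div_nonneg _ (by positivity)
      have : (0:ℝ) ≤ M - mm := by linarith
      positivity)]
    rw [div_le_iff₀ (by positivity)]
    have h1 : (j:ℝ) * dist p c * (M - mm) ≤ M * dist p c * 1 := by
      have hMmm2 : (M:ℝ) - mm ≤ 1 := by linarith
      have hMmm3 : (0:ℝ) ≤ M - mm := by linarith
      have hj' : (j:ℝ) ≤ M := hjM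
      nlinarith [mul_nonneg (mul_nonneg (sub_nonneg.2 hj') hC0) hMmm3,
        mul_nonneg (mul_nonneg hMpos.le hC0) (sub_nonneg.2 hMmm2)]
    calc (j:ℝ) * dist p c * (M - mm) ≤ M * dist p c * 1 := h1
      _ = dist p c * M := by ring
      _ ≤ (8 * D * mm) * M := by nlinarith
      _ = 8 * D * (mm * M) := by ring
  have d1 := repar γ a hγ m hm hmM hMm1 hjm hL
  have d3 := repar γ' b hγ' m' hm' hm'M hMm1' hjm' hL'
  have d2 : dist (γ (t * L)) (γ' (t * L')) ≤ 24 * D - 16 * D := by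
    have := cat0_convex hcat hγ hγ' (t := t) ⟨ht0, ht1⟩
    have h8 : t * dist a b ≤ 8 * D := by nlinarith
    rw [← hLdef, ← hL'def] at this
    linarith
  calc dist (γ ((j:ℝ) * (L / m))) (γ' ((j:ℝ) * (L' / m')))
      ≤ dist (γ ((j:ℝ) * (L / m))) (γ (t * L)) + dist (γ (t * L)) (γ' (t * L'))
        + dist (γ' (t * L')) (γ' ((j:ℝ) * (L' / m'))) := dist_triangle4 _ _ _ _
    _ ≤ 8 * D + (24 * D - 16 * D) + 8 * D := by
        have := d3
        rw [dist_comm (γ' (t * L'))]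
        linarith [d1, d2, this]
    _ = 24 * D := by ring

end Main2

section Main3
variable {G X : Type*} [Group G] [MetricSpace X] [MulAction G X]
variable {p : X} {D : ℝ} {S : Set G}

set_option linter.unusedSectionVars false
set_option maxHeartbeats 4000000

lemma main_filling (hgeo : IsGeodesicSpace X) (hcat : IsCAT0 X)
    (hiso : ∀ (g : G) (x y : X), dist (g • x) (g • y) = dist x y)
    (hD : 0 < D) (hcocpt : ∀ x : X, ∃ g : G, dist x (g • p) ≤ 2 * D)
    (hSd : ∀ g : G, g ∈ S ↔ dist (g • p) p < 8 * D)
    (hsymm : ∀ s : S, ((s : G))⁻¹ ∈ S)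
    {R : Set (FreeGroup S)}
    (hRc : ∀ w : List S, w.length ≤ 46 → wordProd S w = 1 → wordToFree S w ∈ R)
    (w : List S) (hw : wordProd S w = 1) :
    Nrel R (wordToFree S w)
      (24 * ∑ i ∈ Finset.range w.length, (wordDist S (wordProd S (w.take (i + 1))) 1 + 1)) := by
  classical
  set m : G → ℕ := fun g => wordDist S g 1 with hm_def
  choose γg hγg using fun g : G => hgeo p (g • p)
  set hpt : G → ℕ → G := fun g j =>
    if j = 0 then 1 else if m g ≤ j then g
    else Classical.choose (hcocpt (γg g ((j:ℝ) * (dist p (g • p) / m g)))) with hpt_def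
  have hpt0 : ∀ g, hpt g 0 = 1 := by intro g; simp [hpt_def]
  have hptm : ∀ g, hpt g (m g) = g := by
    intro g
    by_cases h : m g = 0
    · have hg1 : g = 1 := eq_one_of_wordDist_zero hgeo hiso hD hcocpt hSd h
      rw [h]; simp [hpt_def, hg1]
    · simp [hpt_def, h]
  have hpt_top : ∀ g j, m g ≤ j → hpt g j = g := by
    intro g j hj
    by_cases h0 : j = 0
    · subst h0
      have h : m g = 0 := Nat.le_zero.1 hj
      rw [← h, hptm]
    · simp [hpt_def, h0, hj]
  have hpt_near : ∀ g, ∀ j, j ≤ m g →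
      dist (γg g ((j:ℝ) * (dist p (g • p) / m g))) (hpt g j • p) ≤ 2 * D := by
    intro g j hj
    by_cases h0 : j = 0
    · subst h0
      have : ((0:ℕ):ℝ) * (dist p (g • p) / m g) = 0 := by simp
      rw [this, (hγg g).1, hpt0, one_smul, dist_self]
      linarith
    by_cases hmj : m g ≤ j
    · have hjm : j = m g := le_antisymm hj hmj
      have hmne : m g ≠ 0 := by omega
      have hmpos : (0:ℝ) < (m g : ℝ) := by exact_mod_cast Nat.pos_of_ne_zero hmne
      have harg : ((j:ℕ):ℝ) * (dist p (g • p) / m g) = dist p (g • p) := by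
        rw [hjm]; field_simp
      rw [harg, (hγg g).2.1, hpt_top g j hmj, dist_self]
      linarith
    · have : hpt g j = Classical.choose (hcocpt (γg g ((j:ℝ) * (dist p (g • p) / m g)))) := by
        simp [hpt_def, h0, hmj]
      rw [this]
      exact Classical.choose_spec (hcocpt _)
  -- length of geodesics
  have hLle : ∀ g : G, dist p (g • p) ≤ 8 * D * m g := fun g =>
    dist_le_wordDist hgeo hiso hD hcocpt hSd g
  -- conversion of distances through the action
  have hconv : ∀ x y : G, dist ((x⁻¹ * y) • p) p = dist (y • p) (x • p) := by
    intro x y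
    calc dist ((x⁻¹ * y) • p) p = dist (x • ((x⁻¹ * y) • p)) (x • p) := (hiso _ _ _).symm
      _ = dist (y • p) (x • p) := by rw [smul_smul, mul_inv_cancel_left]
  -- side words
  have hσex : ∀ (g : G) (j : ℕ), ∃ wrd : List S, wrd.length ≤ 4 ∧
      wordProd S wrd = (hpt g j)⁻¹ * hpt g (j + 1) := by
    intro g j
    by_cases hj : j < m g
    · -- geometric case
      apply exists_word_of_dist hgeo hiso hD hcocpt hSd
      rw [dist_comm p _, hconv]
      have hmne : m g ≠ 0 := by omega
      have hmpos : (0:ℝ) < (m g : ℝ) := by exact_mod_cast Nat.pos_of_ne_zero hmne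
      set L := dist p (g • p) with hLdef
      have hL0 : 0 ≤ L := dist_nonneg
      set u := L / m g with hu
      have hu0 : 0 ≤ u := by positivity
      have hu8 : u ≤ 8 * D := by
        rw [hu, div_le_iff₀ hmpos]
        calc L ≤ 8 * D * m g := hLle g
          _ = 8 * D * (m g : ℝ) := by norm_num
      have hstep : dist (γg g (((j+1:ℕ):ℝ) * u)) (γg g ((j:ℝ) * u)) = u := by
        have h1 : ((j+1:ℕ):ℝ) * u ∈ Set.Icc (0:ℝ) L := by
          constructor
          · positivity
          · push_cast
            have : ((j:ℝ) + 1) ≤ (m g : ℝ) := by exact_mod_cast hj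
            rw [hu]
            rw [mul_div_assoc']
            rw [div_le_iff₀ hmpos]
            nlinarith
        have h2 : ((j:ℕ):ℝ) * u ∈ Set.Icc (0:ℝ) L := by
          constructor
          · positivity
          · have : ((j:ℝ)) ≤ (m g : ℝ) := by exact_mod_cast hj.le
            rw [hu, mul_div_assoc', div_le_iff₀ hmpos]
            nlinarith
        rw [(hγg g).2.2 _ h1 _ h2]
        push_cast
        rw [show ((j:ℝ) + 1) * u - (j:ℝ) * u = u by ring, abs_of_nonneg hu0]
      have t1 : dist (hpt g (j+1) • p) (γg g (((j+1:ℕ):ℝ) * u)) ≤ 2 * D := by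
        rw [dist_comm]; exact hpt_near g (j+1) (by omega)
      have t3 : dist (γg g ((j:ℝ) * u)) (hpt g j • p) ≤ 2 * D := hpt_near g j hj.le
      calc dist (hpt g (j+1) • p) (hpt g j • p)
          ≤ dist (hpt g (j+1) • p) (γg g (((j+1:ℕ):ℝ) * u)) +
            dist (γg g (((j+1:ℕ):ℝ) * u)) (γg g ((j:ℝ) * u)) +
            dist (γg g ((j:ℝ) * u)) (hpt g j • p) := dist_triangle4 _ _ _ _
        _ ≤ 2 * D + u + 2 * D := by rw [hstep] at *; linarith
        _ < 4 * D * (4:ℕ) := by push_cast; linarith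
    · -- trivial case
      refine ⟨[], by simp, ?_⟩
      rw [hpt_top g j (by omega), hpt_top g (j+1) (by omega)]
      simp
  choose σw hσlen hσprod using hσex
  set sideJoin : G → ℕ → List S := fun g j => (List.range j).flatMap (σw g) with hsideJoin
  have hside_succ : ∀ g j, sideJoin g (j+1) = sideJoin g j ++ σw g j := by
    intro g j
    simp only [hsideJoin]
    rw [List.range_succ, List.flatMap_append]
    simp
  have hside_prod : ∀ g j, wordProd S (sideJoin g j) = hpt g j := by
    intro g j
    induction j with
    | zero => simp [hsideJoin, hpt0]
    | succ j ih =>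
      rw [hside_succ, wordProd_append, ih, hσprod]
      group
  set Γ : G → ℕ → FreeGroup S := fun g j => wordToFree S (sideJoin g j) with hΓ
  set Γf : G → FreeGroup S := fun g => Γ g (m g) with hΓf
  have hΓsucc : ∀ g j, Γ g (j+1) = Γ g j * wordToFree S (σw g j) := by
    intro g j
    simp only [hΓ]
    rw [hside_succ, wordToFree_append]
  have hΓ0 : ∀ g, Γ g 0 = 1 := by intro g; simp [hΓ, hsideJoin]
  have hΓf1 : Γf (1:G) = 1 := by
    have hm1 : m (1:G) = 0 := wordDist_one_one
    simp only [hΓf, hm1]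
    exact hΓ0 1

  have triangle : ∀ (g : G) (s : S),
      Nrel R (Γf g * FreeGroup.of s * (Γf (g * (s:G)))⁻¹) (24 * (m (g * (s:G)) + 1)) := by
    intro g s
    set g' := g * (s:G) with hg'
    set mn := min (m g) (m g') with hmn
    have hmle : m g' ≤ m g + 1 := wordDist_mul_le g s hgeo hiso hD hcocpt hSd
    have hmge : m g ≤ m g' + 1 := wordDist_le_mul g s hgeo hiso hD hcocpt hSd
    have hdab : dist (g • p) (g' • p) ≤ 8 * D := by
      have h1 : dist (g • p) (g' • p) = dist p ((s:G) • p) := by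
        rw [hg', mul_smul]
        exact hiso g p ((s:G) • p)
      rw [h1, dist_comm]
      exact ((hSd s).1 s.2).le
    have hρex : ∀ j : ℕ, ∃ wrd : List S, wrd.length ≤ 8 ∧
        (j ≤ mn → wordProd S wrd = (hpt g j)⁻¹ * hpt g' j) := by
      intro j
      by_cases hj : j ≤ mn
      · by_cases hj0 : j = 0
        · subst hj0
          exact ⟨[], by simp, fun _ => by rw [hpt0, hpt0]; simp⟩
        · have hj1 : 1 ≤ j := Nat.pos_of_ne_zero hj0
          have hjmg : j ≤ m g := le_trans hj (min_le_left _ _)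
          have hjmg' : j ≤ m g' := le_trans hj (min_le_right _ _)
          have h1m : 1 ≤ m g := le_trans hj1 hjmg
          have h1m' : 1 ≤ m g' := le_trans hj1 hjmg'
          have hrg := rung_geo (p := p) (D := D) hcat (hγg g) (hγg g') hD h1m h1m'
            (hLle g) (hLle g') hdab hmle hmge hjmg hjmg'
          have t1 : dist (hpt g j • p) (γg g ((j:ℝ) * (dist p (g • p) / m g))) ≤ 2 * D := by
            rw [dist_comm]; exact hpt_near g j hjmg
          have t3 : dist (γg g' ((j:ℝ) * (dist p (g' • p) / m g'))) (hpt g' j • p) ≤ 2 * D :=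
            hpt_near g' j hjmg'
          have hd28 : dist (hpt g' j • p) (hpt g j • p) ≤ 28 * D := by
            rw [dist_comm]
            calc dist (hpt g j • p) (hpt g' j • p)
                ≤ dist (hpt g j • p) (γg g ((j:ℝ) * (dist p (g • p) / m g)))
                  + dist (γg g ((j:ℝ) * (dist p (g • p) / m g)))
                      (γg g' ((j:ℝ) * (dist p (g' • p) / m g')))
                  + dist (γg g' ((j:ℝ) * (dist p (g' • p) / m g'))) (hpt g' j • p) :=
                    dist_triangle4 _ _ _ _
              _ ≤ 2 * D + 24 * D + 2 * D := by linarith [hrg, t1, t3]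
              _ = 28 * D := by ring
          obtain ⟨wrd, hl, hp⟩ := exists_word_of_dist hgeo hiso hD hcocpt hSd 8
            ((hpt g j)⁻¹ * hpt g' j)
            (by rw [dist_comm p, hconv]
                calc dist (hpt g' j • p) (hpt g j • p) ≤ 28 * D := hd28
                  _ < 4 * D * (8:ℕ) := by push_cast; linarith)
          exact ⟨wrd, hl, fun _ => hp⟩
      · exact ⟨[], by simp, fun h => absurd h hj⟩
    choose ρw hρlen hρprod using hρex
    have ladder : ∀ j, j ≤ mn →
        Nrel R (Γ g j * wordToFree S (ρw j) * (Γ g' j)⁻¹) (1 + 13 * j) := by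
      intro j
      induction j with
      | zero =>
        intro _
        rw [hΓ0, hΓ0]
        have hprod0 : wordProd S (ρw 0) = 1 := by
          rw [hρprod 0 (Nat.zero_le _), hpt0, hpt0]; simp
        have hmem : wordToFree S (ρw 0) ∈ R := hRc _ (le_trans (hρlen 0) (by norm_num)) hprod0
        have := Nrel_of_mem hmem
        simpa using this.mono (by norm_num)
      | succ j ih =>
        intro hj1
        have hj : j ≤ mn := Nat.le_of_succ_le hj1
        have hjg : j < m g := lt_of_lt_of_le hj1 (min_le_left _ _)
        have hjg' : j < m g' := lt_of_lt_of_le hj1 (min_le_right _ _)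
        have A := ih hj
        set P := wordToFree S (ρw j) with hP
        set P' := wordToFree S (ρw (j+1)) with hP'
        set Sg := wordToFree S (σw g j) with hSg
        set Sg' := wordToFree S (σw g' j) with hSg'
        set WS1 := wordToFree S (starWord hsymm (ρw (j+1))) with hWS1
        set WS2 := wordToFree S (starWord hsymm (σw g j)) with hWS2
        have hE1 : Nrel R (P' * WS1) 8 :=
          (Nrel_word_star hsymm hRc (ρw (j+1))).mono (hρlen (j+1))
        have hE2 : Nrel R (Sg * WS2) 4 :=
          (Nrel_word_star hsymm hRc (σw g j)).mono (hσlen g j)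
        set Zw := ρw j ++ σw g' j ++ starWord hsymm (ρw (j+1)) ++ starWord hsymm (σw g j)
          with hZw
        have hZlen : Zw.length ≤ 46 := by
          have l1 := hρlen j; have l2 := hρlen (j+1)
          have l3 := hσlen g j; have l4 := hσlen g' j
          simp only [hZw, List.length_append, starWord_length]
          omega
        have hZprod : wordProd S Zw = 1 := by
          simp only [hZw, wordProd_append, wordProd_starWord]
          rw [hρprod j hj, hρprod (j+1) hj1, hσprod g j, hσprod g' j]
          group
        have hZnrel : Nrel R (wordToFree S Zw) 1 := Nrel_of_mem (hRc _ hZlen hZprod)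
        have hZeq : wordToFree S Zw = P * Sg' * (P'⁻¹ * (P' * WS1)) * (Sg⁻¹ * (Sg * WS2)) := by
          simp only [hZw, wordToFree_append, hP, hSg', hWS1, hWS2]
          group
        have hY : Nrel R (P⁻¹ * Sg * P' * Sg'⁻¹) 13 := by
          have e : P⁻¹ * Sg * P' * Sg'⁻¹ =
              (P⁻¹ * (Sg * WS2) * (P⁻¹)⁻¹) * (P⁻¹ * (wordToFree S Zw)⁻¹ * (P⁻¹)⁻¹) *
              ((Sg' * P'⁻¹) * (P' * WS1) * (Sg' * P'⁻¹)⁻¹) := by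
            rw [hZeq]; group
          rw [e]
          exact (((hE2.conj (P⁻¹)).mul (hZnrel.inv.conj (P⁻¹))).mul
            (hE1.conj (Sg' * P'⁻¹))).mono (by norm_num)
        have hstep : Γ g (j+1) * P' * (Γ g' (j+1))⁻¹ =
            (Γ g j * P * (Γ g' j)⁻¹) * ((Γ g' j) * (P⁻¹ * Sg * P' * Sg'⁻¹) * (Γ g' j)⁻¹) := by
          rw [hΓsucc g j, hΓsucc g' j]
          simp only [hP, hSg, hSg']
          group
        rw [hstep]
        exact (A.mul (hY.conj (Γ g' j))).mono (by omega)
    have hcapP := ladder mn (le_refl mn)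
    set Pm := wordToFree S (ρw mn) with hPm
    have hmnle : mn ≤ m g' := min_le_right _ _
    rcases Nat.lt_trichotomy (m g) (m g') with hlt | heq | hgt
    · -- m g' = m g + 1
      have hcase : m g' = m g + 1 := by omega
      have hmneq : mn = m g := by omega
      have e1 : Γf g = Γ g mn := by simp only [hΓf]; rw [hmneq]
      have e2 : Γf g' = Γ g' mn * wordToFree S (σw g' mn) := by
        simp only [hΓf]
        rw [show m g' = mn + 1 by omega, hΓsucc]
      set Sm := wordToFree S (σw g' mn) with hSm
      set WS := wordToFree S (starWord hsymm [s]) with hWS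
      have hE : Nrel R (FreeGroup.of s * WS) 1 := by
        have := (Nrel_word_star hsymm hRc [s]).mono (le_refl 1)
        simpa using this
      set Zw := ρw mn ++ σw g' mn ++ starWord hsymm [s] with hZw
      have hZlen : Zw.length ≤ 46 := by
        have l1 := hρlen mn; have l2 := hσlen g' mn
        simp only [hZw, List.length_append, starWord_length]
        simp; omega
      have hZprod : wordProd S Zw = 1 := by
        simp only [hZw, wordProd_append, wordProd_starWord]
        rw [hρprod mn (le_refl _), hσprod g' mn]
        rw [show hpt g mn = g by rw [hmneq, hptm],
          show hpt g' (mn + 1) = g' by rw [show mn + 1 = m g' by omega, hptm]]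
        simp only [hg']
        simp [wordProd]
      have hZnrel : Nrel R (wordToFree S Zw) 1 := Nrel_of_mem (hRc _ hZlen hZprod)
      have hZeq : wordToFree S Zw = Pm * Sm * ((FreeGroup.of s)⁻¹ * (FreeGroup.of s * WS)) := by
        simp only [hZw, wordToFree_append, hPm, hSm, hWS, wordToFree_singleton]
        group
      have key : Γf g * FreeGroup.of s * (Γf g')⁻¹ =
          (Γ g mn * Pm * (Γ g' mn)⁻¹) *
          ((Γ g' mn) * ((Pm⁻¹ * (FreeGroup.of s * WS) * (Pm⁻¹)⁻¹) *
            (Pm⁻¹ * (wordToFree S Zw)⁻¹ * (Pm⁻¹)⁻¹)) * (Γ g' mn)⁻¹) := by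
        rw [e1, e2, hZeq]
        group
      rw [key]
      exact (hcapP.mul (((hE.conj (Pm⁻¹)).mul (hZnrel.inv.conj (Pm⁻¹))).conj (Γ g' mn))).mono
        (by omega)
    · -- m g = m g'
      have hmneq : mn = m g := by omega
      have hmneq' : mn = m g' := by omega
      have e1 : Γf g = Γ g mn := by simp only [hΓf]; rw [hmneq]
      have e2 : Γf g' = Γ g' mn := by simp only [hΓf]; rw [hmneq']
      set WS := wordToFree S (starWord hsymm [s]) with hWS
      have hE : Nrel R (FreeGroup.of s * WS) 1 := by
        have := (Nrel_word_star hsymm hRc [s]).mono (le_refl 1)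
        simpa using this
      set Zw := ρw mn ++ starWord hsymm [s] with hZw
      have hZlen : Zw.length ≤ 46 := by
        have l1 := hρlen mn
        simp only [hZw, List.length_append, starWord_length]
        simp; omega
      have hZprod : wordProd S Zw = 1 := by
        simp only [hZw, wordProd_append, wordProd_starWord]
        rw [hρprod mn (le_refl _)]
        rw [show hpt g mn = g by rw [hmneq, hptm],
          show hpt g' mn = g' by rw [hmneq', hptm]]
        simp only [hg']
        simp [wordProd]
      have hZnrel : Nrel R (wordToFree S Zw) 1 := Nrel_of_mem (hRc _ hZlen hZprod)
      have hZeq : wordToFree S Zw = Pm * ((FreeGroup.of s)⁻¹ * (FreeGroup.of s * WS)) := by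
        simp only [hZw, wordToFree_append, hPm, hWS, wordToFree_singleton]
        group
      have key : Γf g * FreeGroup.of s * (Γf g')⁻¹ =
          (Γ g mn * Pm * (Γ g' mn)⁻¹) *
          ((Γ g' mn) * ((Pm⁻¹ * (FreeGroup.of s * WS) * (Pm⁻¹)⁻¹) *
            (Pm⁻¹ * (wordToFree S Zw)⁻¹ * (Pm⁻¹)⁻¹)) * (Γ g' mn)⁻¹) := by
        rw [e1, e2, hZeq]
        group
      rw [key]
      exact (hcapP.mul (((hE.conj (Pm⁻¹)).mul (hZnrel.inv.conj (Pm⁻¹))).conj (Γ g' mn))).mono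
        (by omega)
    · -- m g = m g' + 1
      have hcase : m g = m g' + 1 := by omega
      have hmneq : mn = m g' := by omega
      have e1 : Γf g = Γ g mn * wordToFree S (σw g mn) := by
        simp only [hΓf]
        rw [show m g = mn + 1 by omega, hΓsucc]
      have e2 : Γf g' = Γ g' mn := by simp only [hΓf]; rw [hmneq]
      set Sm := wordToFree S (σw g mn) with hSm
      set WSρ := wordToFree S (starWord hsymm (ρw mn)) with hWSρ
      have hE : Nrel R (Pm * WSρ) 8 :=
        (Nrel_word_star hsymm hRc (ρw mn)).mono (hρlen mn)
      set Zw := σw g mn ++ [s] ++ starWord hsymm (ρw mn) with hZw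
      have hZlen : Zw.length ≤ 46 := by
        have l1 := hρlen mn; have l2 := hσlen g mn
        simp only [hZw, List.length_append, starWord_length]
        simp; omega
      have hZprod : wordProd S Zw = 1 := by
        simp only [hZw, wordProd_append, wordProd_starWord]
        rw [hρprod mn (le_refl _), hσprod g mn]
        rw [show hpt g (mn + 1) = g by rw [show mn + 1 = m g by omega, hptm],
          show hpt g' mn = g' by rw [hmneq, hptm]]
        simp only [hg']
        simp [wordProd]
        group
      have hZnrel : Nrel R (wordToFree S Zw) 1 := Nrel_of_mem (hRc _ hZlen hZprod)
      have hZeq : wordToFree S Zw = Sm * FreeGroup.of s * (Pm⁻¹ * (Pm * WSρ)) := by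
        simp only [hZw, wordToFree_append, hPm, hSm, hWSρ, wordToFree_singleton]
        group
      have key : Γf g * FreeGroup.of s * (Γf g')⁻¹ =
          (Γ g mn * Pm * (Γ g' mn)⁻¹) *
          ((Γ g' mn) * ((Pm⁻¹ * (wordToFree S Zw) * (Pm⁻¹)⁻¹) *
            (Pm⁻¹ * (Pm * WSρ)⁻¹ * (Pm⁻¹)⁻¹)) * (Γ g' mn)⁻¹) := by
        rw [e1, e2, hZeq]
        group
      rw [key]
      exact (hcapP.mul (((hZnrel.conj (Pm⁻¹)).mul (hE.inv.conj (Pm⁻¹))).conj (Γ g' mn))).mono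
        (by omega)

  have outer : ∀ i, i ≤ w.length →
      Nrel R (wordToFree S (w.take i) * (Γf (wordProd S (w.take i)))⁻¹)
        (∑ j ∈ Finset.range i, 24 * (m (wordProd S (w.take (j+1))) + 1)) := by
    intro i
    induction i with
    | zero =>
      intro _
      simp only [List.take_zero, wordToFree_nil, wordProd_nil, hΓf1]
      simpa using (Nrel_one (R := R))
    | succ i ih =>
      intro hi1
      have hi : i ≤ w.length := Nat.le_of_succ_le hi1
      have hilt : i < w.length := hi1
      have htake : w.take (i+1) = w.take i ++ [w[i]] := by
        rw [List.take_succ, List.getElem?_eq_getElem hilt]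
        simp
      have hfree : wordToFree S (w.take (i+1)) =
          wordToFree S (w.take i) * FreeGroup.of (w[i]) := by
        rw [htake, wordToFree_append, wordToFree_singleton]
      have hprod : wordProd S (w.take (i+1)) = wordProd S (w.take i) * (w[i] : G) := by
        rw [htake, wordProd_append]
        simp [wordProd]
      have key : wordToFree S (w.take (i+1)) * (Γf (wordProd S (w.take (i+1))))⁻¹ =
          (wordToFree S (w.take i) * (Γf (wordProd S (w.take i)))⁻¹) *
          (Γf (wordProd S (w.take i)) * FreeGroup.of (w[i]) *
            (Γf (wordProd S (w.take i) * ((w[i] : S) : G)))⁻¹) := by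
        rw [hfree, hprod]
        group
      rw [key, Finset.sum_range_succ]
      refine (ih hi).mul ?_
      have htr := triangle (wordProd S (w.take i)) (w[i])
      rw [← hprod]
      rwa [← hprod] at htr
  have final := outer w.length (le_refl _)
  rw [List.take_length, hw, hΓf1] at final
  simp only [inv_one, mul_one] at final
  rw [Finset.mul_sum]
  exact final

end Main3

/-- For a CAT(0) group with the explicit generating set
`S = {g : g·B(p,4D) ∩ B(p,4D) ≠ ∅}` and relator set `R` the words of length at most
`46` representing the identity, the radial isoperimetric inequality holds with
constant `24`. -/
theorem cat0_group_explicit_quadratic_radial_isoperimetric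
    {G X : Type*} [Group G] [MetricSpace X] [MulAction G X]
    (hgeo : IsGeodesicSpace X) (hcat : IsCAT0 X) (hproper : ProperSpace X)
    -- `G` acts by isometries
    (hiso : ∀ (g : G) (x y : X), dist (g • x) (g • y) = dist x y)
    -- properly discontinuously
    (hpd : ∀ K K' : Set X, IsCompact K → IsCompact K' →
      {g : G | ((g • ·) '' K ∩ K').Nonempty}.Finite)
    -- and cocompactly
    (p : X) (D : ℝ) (hD : 0 < D)
    (hcocpt : ∀ x : X, ∃ g : G, dist x (g • p) ≤ 2 * D)
    (S : Set G)
    (hS : S = {g : G | ((g • ·) '' Metric.ball p (4 * D) ∩ Metric.ball p (4 * D)).Nonempty})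
    (R : Set (FreeGroup S))
    (hR : R = {x : FreeGroup S | ∃ w : List S,
      w.length ≤ 46 ∧ wordProd S w = 1 ∧ wordToFree S w = x}) :
    S.Finite ∧ S⁻¹ = S ∧ Subgroup.closure S = ⊤ ∧ R.Finite ∧
      Subgroup.normalClosure R = (muEval S).ker ∧
      ∀ w : List S, wordProd S w = 1 →
        area S R w ≤ 24 * ∑ i ∈ Finset.range w.length,
          (wordDist S (wordProd S (w.take (i + 1))) 1 + 1) := by
  have hSd : ∀ g : G, g ∈ S ↔ dist (g • p) p < 8 * D :=
    mem_S_iff hgeo hiso hD hS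
  have hsymm : ∀ s : S, ((s : G))⁻¹ ∈ S := fun s => inv_mem_S hiso hSd s.2
  have hRc : ∀ w : List S, w.length ≤ 46 → wordProd S w = 1 → wordToFree S w ∈ R := by
    intro w hlen hprod
    rw [hR]
    exact ⟨w, hlen, hprod, rfl⟩
  -- finiteness of S
  have hSfin : S.Finite := by
    have hK : IsCompact (Metric.closedBall p (8 * D)) := isCompact_closedBall p _
    refine (hpd _ _ hK hK).subset ?_
    intro g hg
    refine ⟨g • p, ⟨p, ?_, rfl⟩, ?_⟩
    · simp only [Metric.mem_closedBall, dist_self]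
      linarith
    · simp only [Metric.mem_closedBall]
      exact ((hSd g).1 hg).le
  -- symmetry
  have hSsymm : S⁻¹ = S := by
    ext g
    rw [Set.mem_inv]
    constructor
    · intro h
      have := inv_mem_S hiso hSd h
      rwa [inv_inv] at this
    · intro h
      exact inv_mem_S hiso hSd h
  -- generation
  have hSgen : Subgroup.closure S = ⊤ := by
    rw [eq_top_iff]
    intro g _
    obtain ⟨w, _, hprod⟩ := exists_min_word hgeo hiso hD hcocpt hSd g
    rw [← hprod]
    exact wordProd_mem_closure w
  -- finiteness of R
  have hRfin : R.Finite := by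
    haveI : Finite ↥S := hSfin.to_subtype
    refine ((List.finite_length_le ↥S 46).image (wordToFree S)).subset ?_
    rintro x hx
    rw [hR] at hx
    obtain ⟨w, hlen, _, rfl⟩ := hx
    exact ⟨w, hlen, rfl⟩
  -- the filling bound, used twice
  have hfill := main_filling hgeo hcat hiso hD hcocpt hSd hsymm hRc
  -- normal closure equals kernel
  have hRker : Subgroup.normalClosure R = (muEval S).ker := by
    apply le_antisymm
    · apply Subgroup.normalClosure_le_normal
      rintro x hx
      rw [hR] at hx
      obtain ⟨w, _, hprod, rfl⟩ := hx
      show wordToFree S w ∈ (muEval S).ker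
      rw [MonoidHom.mem_ker, muEval_wordToFree, hprod]
    · intro x hx
      rw [MonoidHom.mem_ker] at hx
      set N := Subgroup.normalClosure R with hN
      haveI : N.Normal := Subgroup.normalClosure_normal
      have hNker : N ≤ (muEval S).ker := by
        apply Subgroup.normalClosure_le_normal
        rintro y hy
        rw [hR] at hy
        obtain ⟨w, _, hprod, rfl⟩ := hy
        show wordToFree S w ∈ (muEval S).ker
        rw [MonoidHom.mem_ker, muEval_wordToFree, hprod]
      have key : ∀ z : FreeGroup S, ∃ u : List S, wordToFree S u * z⁻¹ ∈ N := by
        intro z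
        induction z using FreeGroup.induction_on with
        | C1 => exact ⟨[], by simpa using one_mem N⟩
        | of s =>
          refine ⟨[s], ?_⟩
          have : wordToFree S [s] * (FreeGroup.of s : FreeGroup S)⁻¹ = 1 := by
            rw [wordToFree_singleton]
            show FreeGroup.of s * (FreeGroup.of s)⁻¹ = 1
            group
          rw [this]
          exact one_mem N
        | inv_of s _ =>
          refine ⟨[invLetter hsymm s], ?_⟩
          have e : wordToFree S [invLetter hsymm s] * ((FreeGroup.of s : FreeGroup S)⁻¹)⁻¹ =
              wordToFree S [invLetter hsymm s, s] := by
            rw [wordToFree_singleton]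
            show FreeGroup.of (invLetter hsymm s) * FreeGroup.of s = _
            simp [wordToFree]
          rw [e]
          apply Subgroup.subset_normalClosure
          apply hRc
          · simp
          · simp [wordProd]
        | mul y z hy hz =>
          obtain ⟨uy, huy⟩ := hy
          obtain ⟨uz, huz⟩ := hz
          refine ⟨uy ++ uz, ?_⟩
          have e : wordToFree S (uy ++ uz) * (y * z)⁻¹ =
              (wordToFree S uy * (wordToFree S uz * z⁻¹) * (wordToFree S uy)⁻¹) *
              (wordToFree S uy * y⁻¹) := by
            rw [wordToFree_append]
            group
          rw [e]
          exact mul_mem (Subgroup.Normal.conj_mem ‹N.Normal› _ huz _) huy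
      obtain ⟨u, hu⟩ := key x
      have hup : wordProd S u = 1 := by
        have := hNker hu
        rw [MonoidHom.mem_ker, map_mul, map_inv, muEval_wordToFree, hx] at this
        simpa using this
      have huN : wordToFree S u ∈ N := (hfill u hup).mem_normalClosure
      have : x⁻¹ ∈ N := by
        have := mul_mem (inv_mem huN) hu
        simpa [mul_assoc] using this
      simpa using inv_mem this
  refine ⟨hSfin, hSsymm, hSgen, hRfin, hRker, ?_⟩
  intro w hw
  exact area_le_of_Nrel (hfill w hw)
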